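/- arXiv:1509.07373 — 3 statements merged into one kernel-verified Lean document; each statement's English description precedes it below -/
import Mathlib

section
/- Suppose ∑_{j∈J} γ_j < ∞ and C_j < ∞ for every j. Then for every φ ∈ D(S) and every j ∈ J one has |Ψ_j(φ)| ≤ 2 C_j and |Ξ_j(φ)| ≤ 4 (3|E̲| + ∑_{l∈J} γ_l + 2η_{j,0} + 2γ_j) C_j. In particular, each component Ξ_j is a bounded function on D(S). -/
open scoped Real BigOperators
open Real

noncomputable section

/-- Distance between the gaps indexed by `j` and `l`
(equals `dist ([Em j, Ep j], [Em l, Ep l])` when these closed intervals are disjoint). -/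
def gapDist {J : Type*} (Em Ep : J → ℝ) (j l : J) : ℝ :=
  max (Em l - Ep j) (Em j - Ep l)

/-- Length `γ_j = E_j^+ - E_j^-` of the `j`-th gap. -/
def gapLen {J : Type*} (Em Ep : J → ℝ) (j : J) : ℝ := Ep j - Em j

/-- Craig's constant `C_j = (η_{j,0} + γ_j)^{1/2} ∏_{l ≠ j} (1 + γ_l/η_{j,l})^{1/2}`. -/
def CraigC {J : Type*} (Em Ep : J → ℝ) (E0 : ℝ) (j : J) : ℝ :=
  Real.sqrt ((Em j - E0) + gapLen Em Ep j) *
    ∏' l : {l : J // l ≠ j}, Real.sqrt (1 + gapLen Em Ep l / gapDist Em Ep j l)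

/-- `μ_j(φ) = E_j^- + γ_j cos²(φ_j/2) = E_j^- + γ_j (1 + cos φ_j)/2`. -/
def muD {J : Type*} (Em Ep : J → ℝ) (φ : J → Real.Angle) (j : J) : ℝ :=
  Em j + gapLen Em Ep j * ((1 + Real.Angle.cos (φ j)) / 2)

/-- `Q_1(φ) = E̲ + ∑_j (E_j^- + E_j^+ - 2 μ_j)`. -/
def Q1D {J : Type*} (Em Ep : J → ℝ) (E0 : ℝ) (φ : J → Real.Angle) : ℝ :=
  E0 + ∑' j : J, (Em j + Ep j - 2 * muD Em Ep φ j)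

/-- `Ψ_j(φ) = 2 ((μ_j - E̲) ∏_{l≠j} (E_l^- - μ_j)(E_l^+ - μ_j)/(μ_l - μ_j)²)^{1/2}`. -/
def PsiD {J : Type*} (Em Ep : J → ℝ) (E0 : ℝ) (φ : J → Real.Angle) (j : J) : ℝ :=
  2 * Real.sqrt ((muD Em Ep φ j - E0) *
    ∏' l : {l : J // l ≠ j},
      ((Em l - muD Em Ep φ j) * (Ep l - muD Em Ep φ j) /
        (muD Em Ep φ l - muD Em Ep φ j) ^ 2))

/-- `Ξ_j(φ) = -2 (Q_1(φ) + 2 μ_j) Ψ_j(φ)`. -/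
def XiD {J : Type*} (Em Ep : J → ℝ) (E0 : ℝ) (φ : J → Real.Angle) (j : J) : ℝ :=
  -2 * (Q1D Em Ep E0 φ + 2 * muD Em Ep φ j) * PsiD Em Ep E0 φ j

lemma myOneLeFinprod {ι : Type*} {g : ι → ℝ} (hg1 : ∀ i, 1 ≤ g i) (s : Finset ι) :
    (1:ℝ) ≤ ∏ i ∈ s, g i := by
  have : ∏ i ∈ s, (1:ℝ) ≤ ∏ i ∈ s, g i :=
    Finset.prod_le_prod (by simp) fun i _ => hg1 i
  simpa using this

lemma myTprodNonneg {ι : Type*} {f : ι → ℝ} (hf : ∀ i, 0 ≤ f i) : 0 ≤ ∏' i, f i := by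
  by_cases h : Multipliable f
  · exact ge_of_tendsto' h.hasProd fun s => Finset.prod_nonneg fun i _ => hf i
  · rw [tprod_eq_one_of_not_multipliable h]; exact zero_le_one

lemma myOneLeTprod {ι : Type*} {g : ι → ℝ} (hg : ∀ i, 1 ≤ g i) : 1 ≤ ∏' i, g i := by
  by_cases h : Multipliable g
  · exact ge_of_tendsto' h.hasProd fun s => myOneLeFinprod hg s
  · rw [tprod_eq_one_of_not_multipliable h]

lemma myFinsetProdLeTprod {ι : Type*} {g : ι → ℝ} (hg1 : ∀ i, 1 ≤ g i)
    (hg : Multipliable g) (s : Finset ι) : ∏ i ∈ s, g i ≤ ∏' i, g i := by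
  classical
  refine ge_of_tendsto hg.hasProd (Filter.eventually_atTop.2 ⟨s, fun t hst => ?_⟩)
  rw [← Finset.prod_sdiff hst]
  have h1 : (1:ℝ) ≤ ∏ i ∈ t \ s, g i := myOneLeFinprod hg1 _
  have h2 : (0:ℝ) ≤ ∏ i ∈ s, g i :=
    Finset.prod_nonneg fun i _ => le_trans zero_le_one (hg1 i)
  nlinarith

lemma myTprodLeTprod {ι : Type*} {f g : ι → ℝ} (h0 : ∀ i, 0 ≤ f i) (hfg : ∀ i, f i ≤ g i)
    (hg1 : ∀ i, 1 ≤ g i) (hg : Multipliable g) : ∏' i, f i ≤ ∏' i, g i := by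
  by_cases hf : Multipliable f
  swap
  · rw [tprod_eq_one_of_not_multipliable hf]; exact myOneLeTprod hg1
  refine le_of_tendsto' hf.hasProd fun s => ?_
  calc ∏ i ∈ s, f i ≤ ∏ i ∈ s, g i :=
        Finset.prod_le_prod (fun i _ => h0 i) fun i _ => hfg i
    _ ≤ ∏' i, g i := myFinsetProdLeTprod hg1 hg s

lemma myAngleCos (θ : Real.Angle) : -1 ≤ θ.cos ∧ θ.cos ≤ 1 := by
  induction θ using Real.Angle.induction_on
  rw [Real.Angle.cos_coe]
  exact ⟨Real.neg_one_le_cos _, Real.cos_le_one _⟩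

lemma myFactorBound {A B D η γ : ℝ} (hη : 0 < η) (hηD : η ≤ D) (hAD : A ≤ D)
    (hB : 0 ≤ B) (hBD : B ≤ D + γ) (hγ : 0 ≤ γ) : A * B / D ^ 2 ≤ 1 + γ / η := by
  have hD : 0 < D := lt_of_lt_of_le hη hηD
  have hD2 : 0 < D ^ 2 := by positivity
  rw [div_le_iff₀ hD2]
  have k2 : γ * D ≤ γ / η * D ^ 2 := by
    rw [div_mul_eq_mul_div, le_div_iff₀ hη]
    nlinarith [mul_le_mul_of_nonneg_left hηD (mul_nonneg hγ hD.le)]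
  have k1 : A * B ≤ D * (D + γ) := mul_le_mul hAD hBD hB hD.le
  have expand : (1 + γ / η) * D ^ 2 = D ^ 2 + γ / η * D ^ 2 := by ring
  rw [expand]; nlinarith

/-- Componentwise bounds: `|Ψ_j(φ)| ≤ 2 C_j` and
`|Ξ_j(φ)| ≤ 4 (3|E̲| + ∑_l γ_l + 2 η_{j,0} + 2 γ_j) C_j`, so each `Ξ_j` is bounded on `D(S)`. -/
theorem psi_xi_bounded
    {J : Type*} [Countable J] (Em Ep : J → ℝ) (E0 : ℝ)
    (hlt : ∀ j, Em j < Ep j) (hE0 : ∀ j, E0 < Em j)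
    (hsep : ∀ j l : J, j ≠ l → 0 < gapDist Em Ep j l)
    (hsum : Summable fun j => gapLen Em Ep j)
    (hCfin : ∀ j, Multipliable fun l : {l : J // l ≠ j} =>
      Real.sqrt (1 + gapLen Em Ep l / gapDist Em Ep j l)) :
    ∀ (φ : J → Real.Angle) (j : J),
      |PsiD Em Ep E0 φ j| ≤ 2 * CraigC Em Ep E0 j ∧
      |XiD Em Ep E0 φ j| ≤
        4 * (3 * |E0| + (∑' l : J, gapLen Em Ep l) + 2 * (Em j - E0) + 2 * gapLen Em Ep j) *
          CraigC Em Ep E0 j := by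
  intro φ j
  have hγpos : ∀ l, 0 < gapLen Em Ep l := fun l => sub_pos.mpr (hlt l)
  have hμlo : ∀ l, Em l ≤ muD Em Ep φ l := by
    intro l
    obtain ⟨h1, h2⟩ := myAngleCos (φ l)
    have := (hγpos l).le
    simp only [muD]
    nlinarith
  have hμhi : ∀ l, muD Em Ep φ l ≤ Ep l := by
    intro l
    obtain ⟨h1, h2⟩ := myAngleCos (φ l)
    have h3 := (hγpos l).le
    have h4 : Ep l = Em l + gapLen Em Ep l := by simp [gapLen]
    rw [h4]
    simp only [muD]
    nlinarith
  set μ : J → ℝ := muD Em Ep φ with hμ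
  set f : {l : J // l ≠ j} → ℝ := fun l =>
    (Em l - μ j) * (Ep l - μ j) / (μ l - μ j) ^ 2 with hf
  set g : {l : J // l ≠ j} → ℝ := fun l =>
    1 + gapLen Em Ep l / gapDist Em Ep j l with hg
  have hkey : ∀ l : {l : J // l ≠ j}, 0 ≤ f l ∧ f l ≤ g l := by
    intro l
    have hη := hsep j l (Ne.symm l.2)
    rcases lt_max_iff.mp hη with h | h
    · -- gap j lies to the left of gap l
      have hmax : gapDist Em Ep j l = Em l.1 - Ep j :=
        max_eq_left (by linarith [hlt j, hlt l.1])
      have hA : (0:ℝ) ≤ Em l.1 - μ j := by linarith [hμhi j]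
      have hB : (0:ℝ) ≤ Ep l.1 - μ j := by linarith [hlt l.1]
      constructor
      · exact div_nonneg (mul_nonneg hA hB) (sq_nonneg _)
      · show (Em l.1 - μ j) * (Ep l.1 - μ j) / (μ l.1 - μ j) ^ 2
            ≤ 1 + gapLen Em Ep l.1 / gapDist Em Ep j l.1
        rw [hmax]
        refine myFactorBound h ?_ ?_ hB ?_ (hγpos l.1).le
        · linarith [hμlo l.1, hμhi j]
        · linarith [hμlo l.1]
        · have : gapLen Em Ep l.1 = Ep l.1 - Em l.1 := rfl
          linarith [hμlo l.1]
    · -- gap j lies to the right of gap l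
      have hmax : gapDist Em Ep j l = Em j - Ep l.1 :=
        max_eq_right (by linarith [hlt j, hlt l.1])
      have hA : (0:ℝ) ≤ μ j - Ep l.1 := by linarith [hμlo j]
      have hB : (0:ℝ) ≤ μ j - Em l.1 := by linarith [hlt l.1]
      have hrw : f l = (μ j - Ep l.1) * (μ j - Em l.1) / (μ j - μ l.1) ^ 2 := by
        show (Em l.1 - μ j) * (Ep l.1 - μ j) / (μ l.1 - μ j) ^ 2 = _
        ring
      constructor
      · rw [hrw]; exact div_nonneg (mul_nonneg hA hB) (sq_nonneg _)
      · rw [hrw]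
        show _ ≤ 1 + gapLen Em Ep l.1 / gapDist Em Ep j l.1
        rw [hmax]
        refine myFactorBound h ?_ ?_ hB ?_ (hγpos l.1).le
        · linarith [hμlo j, hμhi l.1]
        · linarith [hμhi l.1]
        · have : gapLen Em Ep l.1 = Ep l.1 - Em l.1 := rfl
          linarith [hμhi l.1]
  have h0 : ∀ l, 0 ≤ f l := fun l => (hkey l).1
  have hfg : ∀ l, f l ≤ g l := fun l => (hkey l).2
  have hg1 : ∀ l : {l : J // l ≠ j}, 1 ≤ g l := by
    intro l
    have := div_pos (hγpos l.1) (hsep j l (Ne.symm l.2))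
    show (1:ℝ) ≤ 1 + gapLen Em Ep l.1 / gapDist Em Ep j l.1
    linarith
  have hsq : (fun l : {l : J // l ≠ j} =>
      Real.sqrt (1 + gapLen Em Ep l / gapDist Em Ep j l) *
      Real.sqrt (1 + gapLen Em Ep l / gapDist Em Ep j l)) = g := by
    funext l
    exact Real.mul_self_sqrt (le_trans zero_le_one (hg1 l))
  have hgmul : Multipliable g := by
    have := (hCfin j).mul (hCfin j)
    rwa [hsq] at this
  set Q : ℝ := ∏' l : {l : J // l ≠ j},
      Real.sqrt (1 + gapLen Em Ep l / gapDist Em Ep j l) with hQ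
  have hQsq : Q * Q = ∏' l, g l := by
    rw [hQ, ← Multipliable.tprod_mul (hCfin j) (hCfin j)]
    exact tprod_congr fun l => by
      exact Real.mul_self_sqrt (le_trans zero_le_one (hg1 l))
  have hQ1 : 1 ≤ Q := by
    refine myOneLeTprod fun l => ?_
    have := Real.sqrt_le_sqrt (hg1 l)
    rwa [Real.sqrt_one] at this
  have hPle : ∏' l, f l ≤ Q * Q := by
    rw [hQsq]; exact myTprodLeTprod h0 hfg hg1 hgmul
  set a : ℝ := (Em j - E0) + gapLen Em Ep j with ha
  have ha0 : 0 ≤ a := by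
    have := hE0 j; have := hγpos j; simp only [ha]; linarith
  have hμjE0 : 0 ≤ μ j - E0 := by linarith [hE0 j, hμlo j]
  have hμja : μ j - E0 ≤ a := by
    have h4 : gapLen Em Ep j = Ep j - Em j := rfl
    have := hμhi j; simp only [ha]; linarith
  have hx : (μ j - E0) * ∏' l, f l ≤ a * (Q * Q) :=
    mul_le_mul hμja hPle (myTprodNonneg h0) ha0
  have hC : CraigC Em Ep E0 j = Real.sqrt a * Q := rfl
  have hC0 : 0 ≤ CraigC Em Ep E0 j := by
    rw [hC]; exact mul_nonneg (Real.sqrt_nonneg _) (by linarith)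
  have hPsi : |PsiD Em Ep E0 φ j| ≤ 2 * CraigC Em Ep E0 j := by
    have hPsieq : PsiD Em Ep E0 φ j = 2 * Real.sqrt ((μ j - E0) * ∏' l, f l) := rfl
    rw [hPsieq, abs_of_nonneg (by positivity)]
    have h1 : Real.sqrt ((μ j - E0) * ∏' l, f l) ≤ Real.sqrt (a * (Q * Q)) :=
      Real.sqrt_le_sqrt hx
    have h2 : Real.sqrt (a * (Q * Q)) = Real.sqrt a * Q := by
      rw [Real.sqrt_mul ha0, Real.sqrt_mul_self (by linarith : (0:ℝ) ≤ Q)]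
    rw [hC]
    linarith [h1, h2.le, h2.ge]
  refine ⟨hPsi, ?_⟩
  -- now the Xi bound
  set S : ℝ := ∑' l : J, gapLen Em Ep l with hS
  have hS0 : 0 ≤ S := tsum_nonneg fun l => (hγpos l).le
  set h : J → ℝ := fun l => Em l + Ep l - 2 * muD Em Ep φ l with hh
  have hhabs : ∀ l, |h l| ≤ gapLen Em Ep l := by
    intro l
    have h4 : gapLen Em Ep l = Ep l - Em l := rfl
    exact abs_le.mpr ⟨by have := hμhi l; simp only [hh]; linarith,
      by have := hμlo l; simp only [hh]; linarith⟩
  have hhsum : Summable fun l => |h l| :=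
    Summable.of_nonneg_of_le (fun l => abs_nonneg _) hhabs hsum
  have hhsum' : Summable h := by
    have := hhsum
    rw [show (fun l => |h l|) = fun l => ‖h l‖ by funext l; rw [Real.norm_eq_abs]] at this
    exact this.of_norm
  have hT : |∑' l, h l| ≤ S := by
    calc |∑' l, h l| ≤ ∑' l, |h l| := by
          have := norm_tsum_le_tsum_norm (f := h) (by simpa [Real.norm_eq_abs] using hhsum)
          simpa [Real.norm_eq_abs] using this
      _ ≤ S := Summable.tsum_le_tsum hhabs hhsum hsum
  have hμjabs : |μ j| ≤ |E0| + (Em j - E0) + gapLen Em Ep j := by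
    have h4 : gapLen Em Ep j = Ep j - Em j := rfl
    have h5 := le_abs_self E0
    have h6 := neg_abs_le E0
    have := hμlo j; have := hμhi j; have := hE0 j
    exact abs_le.mpr ⟨by linarith, by linarith⟩
  have hQ1abs : |Q1D Em Ep E0 φ + 2 * μ j| ≤
      3 * |E0| + S + 2 * (Em j - E0) + 2 * gapLen Em Ep j := by
    have hq : Q1D Em Ep E0 φ = E0 + ∑' l, h l := rfl
    have h5 := le_abs_self E0
    have h6 := neg_abs_le E0
    obtain ⟨hT1, hT2⟩ := abs_le.mp hT
    obtain ⟨hm1, hm2⟩ := abs_le.mp hμjabs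
    rw [hq]
    exact abs_le.mpr ⟨by linarith, by linarith⟩
  have hK0 : 0 ≤ 3 * |E0| + S + 2 * (Em j - E0) + 2 * gapLen Em Ep j := by
    have := abs_nonneg E0; have := hE0 j; have := hγpos j; linarith
  have hXieq : |XiD Em Ep E0 φ j| =
      2 * |Q1D Em Ep E0 φ + 2 * μ j| * |PsiD Em Ep E0 φ j| := by
    show |(-2 : ℝ) * (Q1D Em Ep E0 φ + 2 * μ j) * PsiD Em Ep E0 φ j| = _
    rw [abs_mul, abs_mul]
    norm_num
  rw [hXieq]
  calc 2 * |Q1D Em Ep E0 φ + 2 * μ j| * |PsiD Em Ep E0 φ j|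
      ≤ 2 * (3 * |E0| + S + 2 * (Em j - E0) + 2 * gapLen Em Ep j) *
          (2 * CraigC Em Ep E0 j) := by
        refine mul_le_mul (by linarith) hPsi (abs_nonneg _) (by linarith)
    _ = 4 * (3 * |E0| + S + 2 * (Em j - E0) + 2 * gapLen Em Ep j) *
          CraigC Em Ep E0 j := by ring
end
end

section
/- Let f, g : ℝ → ℝ with f continuous and g continuous, and suppose that at every τ ∈ ℝ with f(τ) ∉ πℤ, f is differentiable at τ with f'(τ) = g(τ). Then for all real a ≤ b: (i) |f(b) − f(a)| ≤ ∫_a^b |g(τ)| dτ; and (ii) if moreover g(τ) ≥ 0 for all τ ∈ (a, b), then 0 ≤ f(b) − f(a) ≤ ∫_a^b g(τ) dτ. -/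
open scoped Real
open Real MeasureTheory Filter Topology

namespace PiZAux

/-- The set of integer multiples of π. -/
def S : Set ℝ := {x | ∃ k : ℤ, x = k * π}

lemma S_eq_range : S = Set.range (fun k : ℤ => π • (k : ℝ)) := by
  ext x; simp [S, eq_comm, mul_comm, smul_eq_mul]

lemma S_countable : S.Countable := by
  rw [S_eq_range]; exact Set.countable_range _

lemma S_closed : IsClosed S := by
  rw [S_eq_range]
  exact ((isClosedMap_smul₀ π).comp Int.isClosedEmbedding_coe_real.isClosedMap).isClosed_range

lemma S_nonempty : S.Nonempty := ⟨0, 0, by simp⟩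

lemma infDist_pos {t : ℝ} (ht : t ∉ S) : 0 < Metric.infDist t S :=
  (S_closed.notMem_iff_infDist_pos S_nonempty).1 ht

/-- The cutoff weight. -/
noncomputable def w (n : ℕ) (t : ℝ) : ℝ :=
  max 0 (min 1 ((n + 1) * Metric.infDist t S - 1))

lemma w_cont (n : ℕ) : Continuous (w n) := by
  unfold w
  exact continuous_const.max (continuous_const.min
    (((continuous_const.mul (Metric.continuous_infDist_pt S)).sub continuous_const)))

lemma w_nonneg (n : ℕ) (t : ℝ) : 0 ≤ w n t := le_max_left _ _

lemma w_le_one (n : ℕ) (t : ℝ) : w n t ≤ 1 :=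
  max_le zero_le_one (min_le_left _ _)

lemma w_eq_zero {n : ℕ} {t : ℝ} (h : Metric.infDist t S ≤ 1 / (n + 1)) : w n t = 0 := by
  have hn : (0:ℝ) < n + 1 := by positivity
  have h1 : ((n:ℝ) + 1) * Metric.infDist t S - 1 ≤ 0 := by
    have := (mul_le_mul_of_nonneg_left h hn.le)
    rw [mul_one_div, div_self hn.ne'] at this
    linarith
  have : min 1 ((n + 1) * Metric.infDist t S - 1) ≤ 0 := le_trans (min_le_right _ _) h1
  exact max_eq_left this

lemma w_tendsto {t : ℝ} (ht : t ∉ S) : Tendsto (fun n => w n t) atTop (𝓝 1) := by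
  have hd := infDist_pos ht
  have : ∀ᶠ n : ℕ in atTop, w n t = 1 := by
    obtain ⟨N, hN⟩ := exists_nat_ge (2 / Metric.infDist t S)
    filter_upwards [eventually_ge_atTop N] with n hn
    have h2 : 2 / Metric.infDist t S ≤ (n:ℝ) := le_trans hN (by exact_mod_cast hn)
    have h3 : (2:ℝ) ≤ n * Metric.infDist t S := by
      rw [div_le_iff₀ hd] at h2; linarith
    have h4 : (2:ℝ) ≤ ((n:ℝ) + 1) * Metric.infDist t S := by nlinarith
    have : min 1 (((n:ℝ) + 1) * Metric.infDist t S - 1) = 1 := min_eq_left (by linarith)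
    rw [w, this]; exact max_eq_right zero_le_one
  exact Tendsto.congr' (this.mono fun n h => h.symm) tendsto_const_nhds

/-- The flattened identity. -/
noncomputable def ψ (n : ℕ) (y : ℝ) : ℝ := ∫ t in (0:ℝ)..y, w n t

lemma ψ_hasDerivAt (n : ℕ) (y : ℝ) : HasDerivAt (ψ n) (w n y) y :=
  intervalIntegral.integral_hasDerivAt_right ((w_cont n).intervalIntegrable _ _)
    ((w_cont n).stronglyMeasurableAtFilter _ _) (w_cont n).continuousAt

lemma ψ_sub (n : ℕ) (y₁ y₂ : ℝ) : ψ n y₂ - ψ n y₁ = ∫ t in y₁..y₂, w n t := by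
  rw [ψ, ψ, ← intervalIntegral.integral_add_adjacent_intervals
    ((w_cont n).intervalIntegrable 0 y₁) ((w_cont n).intervalIntegrable y₁ y₂)]
  ring

lemma ψ_tendsto (y : ℝ) : Tendsto (fun n => ψ n y) atTop (𝓝 y) := by
  have hae : ∀ᵐ t : ℝ, t ∉ S := by
    rw [← measure_eq_zero_iff_ae_notMem]
    exact S_countable.measure_zero _
  have h1 : Tendsto (fun n => ∫ t in (0:ℝ)..y, w n t) atTop
      (𝓝 (∫ t in (0:ℝ)..y, (1:ℝ))) := by
    apply intervalIntegral.tendsto_integral_filter_of_dominated_convergence (fun _ => (1:ℝ))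
    · exact Eventually.of_forall fun n =>
        ((w_cont n).aestronglyMeasurable).restrict
    · exact Eventually.of_forall fun n =>
        Eventually.of_forall fun t _ => by
          rw [Real.norm_eq_abs, abs_of_nonneg (w_nonneg n t)]; exact w_le_one n t
    · exact intervalIntegrable_const
    · filter_upwards [hae] with t ht _
      exact w_tendsto ht
  simpa [ψ] using h1

end PiZAux

open PiZAux

/-- If `f` is continuous, `g` is continuous, and `f' = g` holds at every point where
`f(τ) ∉ πℤ`, then for `a ≤ b`: `|f(b) - f(a)| ≤ ∫_a^b |g(τ)| dτ`, and if moreover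
`g ≥ 0` on `(a, b)`, then `0 ≤ f(b) - f(a) ≤ ∫_a^b g(τ) dτ`. -/
theorem integral_bounds_of_deriv_off_piZ
    (f g : ℝ → ℝ) (hf : Continuous f) (hg : Continuous g)
    (hderiv : ∀ τ : ℝ, (∀ k : ℤ, f τ ≠ k * π) → HasDerivAt f (g τ) τ) :
    ∀ a b : ℝ, a ≤ b →
      (|f b - f a| ≤ ∫ τ in a..b, |g τ|) ∧
      ((∀ τ ∈ Set.Ioo a b, 0 ≤ g τ) →
        0 ≤ f b - f a ∧ f b - f a ≤ ∫ τ in a..b, g τ) := by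
  -- derivative of ψ n ∘ f everywhere
  have key : ∀ (n : ℕ) (τ : ℝ), HasDerivAt (fun s => ψ n (f s)) (w n (f τ) * g τ) τ := by
    intro n τ
    by_cases hτ : f τ ∈ S
    · -- locally constant
      have hz : w n (f τ) = 0 := w_eq_zero (by
        rw [Metric.infDist_zero_of_mem hτ]; positivity)
      rw [hz, zero_mul]
      have hnbd : ∀ᶠ s in 𝓝 τ, |f s - f τ| < 1 / (n + 1) := by
        have : ContinuousAt (fun s => |f s - f τ|) τ := by fun_prop
        have h0 : |f τ - f τ| < 1 / (n+1) := by simp; positivity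
        exact this.eventually_lt continuousAt_const (by simpa using h0)
      have heq : (fun s => ψ n (f s)) =ᶠ[𝓝 τ] fun _ => ψ n (f τ) := by
        filter_upwards [hnbd] with s hs
        have : ψ n (f s) - ψ n (f τ) = 0 := by
          rw [ψ_sub]
          rw [intervalIntegral.integral_congr (g := fun _ => (0:ℝ))]
          · simp
          · intro y hy
            apply w_eq_zero
            have hyd : |y - f τ| ≤ |f s - f τ| := by
              rcases Set.mem_uIcc.1 hy with h | h <;> rw [abs_sub_le_iff] <;>
                constructor <;> rcases abs_sub_le_iff.1 (le_refl |f s - f τ|) with _ <;>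
                cases abs_cases (f s - f τ) <;> linarith [h.1, h.2]
            calc Metric.infDist y S ≤ dist y (f τ) := Metric.infDist_le_dist_of_mem hτ
              _ = |y - f τ| := rfl
              _ ≤ |f s - f τ| := hyd
              _ ≤ 1 / (n+1) := hs.le
        linarith
      exact (hasDerivAt_const τ (ψ n (f τ))).congr_of_eventuallyEq heq
    · have hfd : HasDerivAt f (g τ) τ := hderiv τ (by
        intro k hk; exact hτ ⟨k, hk⟩)
      exact (ψ_hasDerivAt n (f τ)).comp τ hfd
  intro a b hab
  set h : ℕ → ℝ → ℝ := fun n τ => w n (f τ) * g τ with hh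
  have hhc : ∀ n, Continuous (h n) := fun n => ((w_cont n).comp hf).mul hg
  have heq : ∀ n, ψ n (f b) - ψ n (f a) = ∫ τ in a..b, h n τ := fun n =>
    (intervalIntegral.integral_eq_sub_of_hasDerivAt (fun τ _ => key n τ)
      ((hhc n).intervalIntegrable a b)).symm
  have hgint : IntervalIntegrable g volume a b := hg.intervalIntegrable a b
  have hgaint : IntervalIntegrable (fun τ => |g τ|) volume a b :=
    (hg.abs).intervalIntegrable a b
  -- limit of differences
  have hlim : Tendsto (fun n => ψ n (f b) - ψ n (f a)) atTop (𝓝 (f b - f a)) :=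
    (ψ_tendsto (f b)).sub (ψ_tendsto (f a))
  constructor
  · -- |f b - f a| ≤ ∫ |g|
    have hb : ∀ n, |ψ n (f b) - ψ n (f a)| ≤ ∫ τ in a..b, |g τ| := by
      intro n
      rw [heq n]
      refine le_trans (intervalIntegral.abs_integral_le_integral_abs hab) ?_
      apply intervalIntegral.integral_mono_on hab ((hhc n).abs.intervalIntegrable a b) hgaint
      intro x _
      rw [hh, abs_mul, abs_of_nonneg (w_nonneg n (f x))]
      exact mul_le_of_le_one_left (abs_nonneg _) (w_le_one n (f x))
    have : Tendsto (fun n => |ψ n (f b) - ψ n (f a)|) atTop (𝓝 |f b - f a|) :=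
      hlim.abs
    exact le_of_tendsto this (Eventually.of_forall hb)
  · intro hgpos
    rcases eq_or_lt_of_le hab with rfl | hab'
    · simp
    have hgIcc : ∀ τ ∈ Set.Icc a b, 0 ≤ g τ := by
      have hcl : Set.Icc a b = closure (Set.Ioo a b) := (closure_Ioo hab'.ne).symm
      rw [hcl]
      intro τ hτ
      have hsub : Set.Ioo a b ⊆ {x | 0 ≤ g x} := hgpos
      have : closure (Set.Ioo a b) ⊆ {x | 0 ≤ g x} :=
        closure_minimal hsub (isClosed_le continuous_const hg)
      exact this hτ
    constructor
    · -- lower bound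
      have hb : ∀ n, 0 ≤ ψ n (f b) - ψ n (f a) := by
        intro n
        rw [heq n]
        apply intervalIntegral.integral_nonneg hab
        intro x hx
        exact mul_nonneg (w_nonneg n (f x)) (hgIcc x hx)
      exact ge_of_tendsto hlim (Eventually.of_forall hb)
    · -- upper bound
      have hb : ∀ n, ψ n (f b) - ψ n (f a) ≤ ∫ τ in a..b, g τ := by
        intro n
        rw [heq n]
        apply intervalIntegral.integral_mono_on hab ((hhc n).intervalIntegrable a b) hgint
        intro x hx
        exact mul_le_of_le_one_left (hgIcc x hx) (w_le_one n (f x))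
      exact le_of_tendsto hlim (Eventually.of_forall hb)
end

section
/- Let f, g : ℝ → ℝ with f continuous and g continuous, and suppose that at every τ ∈ ℝ with f(τ) ∉ πℤ, f is differentiable at τ with f'(τ) = g(τ). If t₀ ∈ ℝ satisfies f(t₀) ∈ πℤ and g(t₀) = 0, then f is differentiable at t₀ with f'(t₀) = 0 = g(t₀). -/
open scoped Real
open Real

/-- MVT-type bound on the right of a point where `f = c₀`. -/
lemma gap_edge_aux_right (f g : ℝ → ℝ) (a b C c₀ : ℝ) (hab : a < b)
    (hf : Continuous f)
    (H : ∀ s ∈ Set.Ioo a b, f s ≠ c₀ → HasDerivAt f (g s) s)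
    (hfa : f a = c₀)
    (hC : ∀ s ∈ Set.Ioo a b, |g s| ≤ C) :
    |f b - c₀| ≤ C * (b - a) := by
  have hC0 : 0 ≤ C :=
    le_trans (abs_nonneg _) (hC ((a + b) / 2) ⟨by linarith, by linarith⟩)
  by_cases hb : f b = c₀
  · simp [hb, mul_nonneg hC0 (by linarith : (0:ℝ) ≤ b - a)]
  · set S : Set ℝ := Set.Icc a b ∩ f ⁻¹' {c₀} with hS
    have hclosed : IsClosed S := isClosed_Icc.inter (isClosed_singleton.preimage hf)
    have hSsub : S ⊆ Set.Icc a b := Set.inter_subset_left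
    have hScompact : IsCompact S := isCompact_Icc.of_isClosed_subset hclosed hSsub
    have hSne : S.Nonempty := ⟨a, ⟨le_refl a, le_of_lt hab⟩, hfa⟩
    have hSbdd : BddAbove S := ⟨b, fun s hs => hs.1.2⟩
    set s₀ := sSup S with hs₀
    have hs₀S : s₀ ∈ S := hScompact.sSup_mem hSne
    have hfs₀ : f s₀ = c₀ := hs₀S.2
    have has₀ : a ≤ s₀ := hs₀S.1.1
    have hs₀b : s₀ < b := lt_of_le_of_ne hs₀S.1.2 (fun h => hb (h ▸ hfs₀))
    have hne : ∀ s ∈ Set.Ioo s₀ b, f s ≠ c₀ := by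
      intro s hs hfs
      have : s ∈ S := ⟨⟨le_trans has₀ hs.1.le, hs.2.le⟩, hfs⟩
      exact absurd (le_csSup hSbdd this) (not_le.mpr hs.1)
    have hderiv' : ∀ s ∈ Set.Ioo s₀ b, HasDerivAt f (g s) s := fun s hs =>
      H s ⟨lt_of_le_of_lt has₀ hs.1, hs.2⟩ (hne s hs)
    obtain ⟨ξ, hξ, hξeq⟩ :=
      exists_hasDerivAt_eq_slope f g hs₀b (hf.continuousOn) hderiv'
    have hbd : |g ξ| ≤ C := hC ξ ⟨lt_of_le_of_lt has₀ hξ.1, hξ.2⟩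
    have : f b - c₀ = g ξ * (b - s₀) := by
      rw [hξeq, hfs₀, div_mul_cancel₀]
      exact ne_of_gt (by linarith)
    rw [this, abs_mul, abs_of_pos (by linarith : (0:ℝ) < b - s₀)]
    calc |g ξ| * (b - s₀) ≤ C * (b - s₀) :=
          mul_le_mul_of_nonneg_right hbd (by linarith)
      _ ≤ C * (b - a) := mul_le_mul_of_nonneg_left (by linarith) hC0

/-- MVT-type bound on the left of a point where `f = c₀`. -/
lemma gap_edge_aux_left (f g : ℝ → ℝ) (a b C c₀ : ℝ) (hab : a < b)
    (hf : Continuous f)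
    (H : ∀ s ∈ Set.Ioo a b, f s ≠ c₀ → HasDerivAt f (g s) s)
    (hfb : f b = c₀)
    (hC : ∀ s ∈ Set.Ioo a b, |g s| ≤ C) :
    |f a - c₀| ≤ C * (b - a) := by
  have key := gap_edge_aux_right (fun s => f (a + b - s)) (fun s => -g (a + b - s))
      a b C c₀ hab (hf.comp (by continuity)) ?_ (by simp [hfb]) ?_
  · simpa using key
  · intro s hs hfs
    have hmem : a + b - s ∈ Set.Ioo a b := ⟨by linarith [hs.2], by linarith [hs.1]⟩
    have hd := H (a + b - s) hmem hfs
    have hid : HasDerivAt (fun s : ℝ => a + b - s) (-1) s := by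
      simpa using ((hasDerivAt_id s).const_sub (a + b))
    have := hd.comp s hid
    exact this.congr_deriv (by ring)
  · intro s hs
    have hmem : a + b - s ∈ Set.Ioo a b := ⟨by linarith [hs.2], by linarith [hs.1]⟩
    simpa using hC (a + b - s) hmem

/-- If `f` is continuous, `g` is continuous, `f' = g` holds at every point where `f(τ) ∉ πℤ`,
and `t₀` satisfies `f(t₀) ∈ πℤ` and `g(t₀) = 0`, then `f` is differentiable at `t₀` with
`f'(t₀) = 0 = g(t₀)`. -/
theorem hasDerivAt_zero_at_gap_edge
    (f g : ℝ → ℝ) (hf : Continuous f) (hg : Continuous g)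
    (hderiv : ∀ τ : ℝ, (∀ k : ℤ, f τ ≠ k * π) → HasDerivAt f (g τ) τ)
    (t₀ : ℝ) (hft₀ : ∃ k : ℤ, f t₀ = k * π) (hgt₀ : g t₀ = 0) :
    HasDerivAt f 0 t₀ := by
  obtain ⟨k, hk⟩ := hft₀
  rw [hasDerivAt_iff_isLittleO, Asymptotics.isLittleO_iff]
  intro c hc
  -- window where |g| ≤ c
  obtain ⟨δ₁, hδ₁, h1⟩ := Metric.continuousAt_iff.mp hg.continuousAt c hc
  -- window where |f - kπ| < π
  obtain ⟨δ₂, hδ₂, h2⟩ := Metric.continuousAt_iff.mp hf.continuousAt π Real.pi_pos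
  set δ := min δ₁ δ₂ with hδdef
  have hδ : 0 < δ := lt_min hδ₁ hδ₂
  have hgsmall : ∀ s : ℝ, |s - t₀| < δ → |g s| ≤ c := by
    intro s hs
    have hd : dist s t₀ < δ₁ := by
      rw [Real.dist_eq]; exact lt_of_lt_of_le hs (min_le_left _ _)
    have := h1 hd
    rw [hgt₀] at this
    simpa [Real.dist_eq] using this.le
  have hfne : ∀ s : ℝ, |s - t₀| < δ → f s ≠ (k : ℝ) * π → ∀ m : ℤ, f s ≠ m * π := by
    intro s hs hsk m hm
    have hd : dist s t₀ < δ₂ := by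
      rw [Real.dist_eq]; exact lt_of_lt_of_le hs (min_le_right _ _)
    have hfclose := h2 hd
    rw [hk] at hfclose
    have hmk : m ≠ k := fun h => hsk (h ▸ hm)
    have h1le : (1 : ℝ) ≤ |(m : ℝ) - k| := by
      have h := Int.one_le_abs (sub_ne_zero.mpr hmk)
      have : ((1 : ℤ) : ℝ) ≤ ((|m - k| : ℤ) : ℝ) := Int.cast_le.mpr h
      rwa [Int.cast_abs, Int.cast_sub, Int.cast_one] at this
    have : |f s - (k:ℝ) * π| = |(m:ℝ) - k| * π := by
      rw [hm]
      rw [show (m:ℝ) * π - (k:ℝ) * π = ((m:ℝ) - k) * π by ring, abs_mul,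
        abs_of_pos Real.pi_pos]
    rw [Real.dist_eq, this] at hfclose
    nlinarith [Real.pi_pos]
  rw [Metric.eventually_nhds_iff]
  refine ⟨δ, hδ, fun x hx => ?_⟩
  rw [Real.dist_eq] at hx
  simp only [smul_eq_mul, mul_zero, sub_zero, Real.norm_eq_abs]
  rcases lt_trichotomy x t₀ with hlt | heq | hgt
  · -- x < t₀ : apply left lemma on [x, t₀]
    have hw : ∀ s ∈ Set.Ioo x t₀, |s - t₀| < δ := by
      intro s hs
      rw [abs_of_neg (by linarith [hs.2] : s - t₀ < 0)]
      rw [abs_of_neg (by linarith : x - t₀ < 0)] at hx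
      linarith [hs.1]
    have key := gap_edge_aux_left f g x t₀ c ((k:ℝ) * π) hlt hf ?_ hk ?_
    · rw [hk]
      calc |f x - (k:ℝ)*π| ≤ c * (t₀ - x) := key
        _ = c * |x - t₀| := by rw [abs_of_neg (by linarith)]; ring
    · intro s hs hsne
      exact hderiv s (hfne s (hw s hs) hsne)
    · intro s hs
      exact hgsmall s (hw s hs)
  · simp [heq]
  · -- x > t₀ : apply right lemma on [t₀, x]
    have hw : ∀ s ∈ Set.Ioo t₀ x, |s - t₀| < δ := by
      intro s hs
      rw [abs_of_pos (by linarith [hs.1] : (0:ℝ) < s - t₀)]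
      rw [abs_of_pos (by linarith : (0:ℝ) < x - t₀)] at hx
      linarith [hs.2]
    have key := gap_edge_aux_right f g t₀ x c ((k:ℝ) * π) hgt hf ?_ hk ?_
    · rw [hk]
      calc |f x - (k:ℝ)*π| ≤ c * (x - t₀) := key
        _ = c * |x - t₀| := by rw [abs_of_pos (by linarith)]
    · intro s hs hsne
      exact hderiv s (hfne s (hw s hs) hsne)
    · intro s hs
      exact hgsmall s (hw s hs)
end
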